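/- arXiv:2310.14647 — 2 statements merged into one kernel-verified Lean document; each statement's English description precedes it below -/
import Mathlib

section
/- If G is a split graph, then the indicated domination number of G equals its independence number: γᵢ(G) = α(G). -/
open Finset

open scoped Classical

noncomputable section

namespace IndicatedDom

variable {V : Type*} [Fintype V]

/-- Closed neighborhood `N[v]` as a `Finset`. -/
def cnbhd (G : SimpleGraph V) (v : V) : Finset V :=
  insert v (G.neighborFinset v)

/-- `D` is a dominating set of `G`. -/
def Dominates (G : SimpleGraph V) (D : Finset V) : Prop :=
  ∀ u, ∃ v ∈ D, u ∈ cnbhd G v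

/-- The set of vertices not dominated by `D`. -/
def undom (G : SimpleGraph V) (D : Finset V) : Finset V :=
  univ.filter fun u => ∀ v ∈ D, u ∉ cnbhd G v

/-- Game value of the indicated domination game with a fuel parameter:
given the set `D` of vertices selected so far, Dominator indicates an
undominated vertex `u` (minimizing), Staller selects a vertex of `N[u]`
(maximizing); each selection counts one. -/
def giAux (G : SimpleGraph V) : ℕ → Finset V → ℕ
  | 0, _ => 0
  | (fuel+1), D =>
    if h : (undom G D).Nonempty then
      (undom G D).inf' h fun u =>
        (cnbhd G u).sup' ⟨u, Finset.mem_insert_self u _⟩ fun v => giAux G fuel (insert v D) + 1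
    else 0

/-- The indicated domination number `γᵢ(G)`. -/
def indicatedDomNum (G : SimpleGraph V) : ℕ :=
  giAux G (Fintype.card V) ∅

/-- Game value of the standard domination game with a fuel parameter:
`dom = true` means it is Dominator's turn (minimizing); legal moves are
vertices dominating at least one new vertex. -/
def gameAux (G : SimpleGraph V) : ℕ → Bool → Finset V → ℕ
  | 0, _, _ => 0
  | (fuel+1), dom, D =>
    if h : (univ.filter fun v => ∃ u ∈ cnbhd G v, u ∈ undom G D).Nonempty then
      if dom then
        (univ.filter fun v => ∃ u ∈ cnbhd G v, u ∈ undom G D).inf' h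
          fun v => gameAux G fuel false (insert v D) + 1
      else
        (univ.filter fun v => ∃ u ∈ cnbhd G v, u ∈ undom G D).sup' h
          fun v => gameAux G fuel true (insert v D) + 1
    else 0

/-- The game domination number `γ_g(G)` (Dominator starts). -/
def gameDomNum (G : SimpleGraph V) : ℕ :=
  gameAux G (Fintype.card V) true ∅

/-- A minimal dominating set. -/
def IsMinimalDominating (G : SimpleGraph V) (D : Finset V) : Prop :=
  Dominates G D ∧ ∀ D' ⊂ D, ¬ Dominates G D'

/-- The upper domination number `Γ(G)`. -/
def upperDomNum (G : SimpleGraph V) : ℕ :=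
  sSup {k | ∃ D : Finset V, IsMinimalDominating G D ∧ D.card = k}

/-- A dominating (Grundy) sequence: every vertex dominates something new,
and the whole sequence dominates `G`. -/
def IsDominatingSeq (G : SimpleGraph V) (l : List V) : Prop :=
  (∀ i : Fin l.length, ∃ u, u ∈ cnbhd G (l.get i) ∧
      ∀ j : Fin l.length, (j : ℕ) < (i : ℕ) → u ∉ cnbhd G (l.get j)) ∧
    Dominates G l.toFinset

/-- The Grundy domination number `γ_gr(G)`. -/
def grundyDomNum (G : SimpleGraph V) : ℕ :=
  sSup {k | ∃ l : List V, IsDominatingSeq G l ∧ l.length = k}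

/-- The independence number `α(G)`. -/
def indepNum (G : SimpleGraph V) : ℕ :=
  sSup {k | ∃ S : Finset V, (∀ x ∈ S, ∀ y ∈ S, ¬ G.Adj x y) ∧ S.card = k}

/-- `S` is irredundant: every `x ∈ S` has a private neighbor w.r.t. `S`. -/
def Irredundant (G : SimpleGraph V) (S : Finset V) : Prop :=
  ∀ x ∈ S, ∃ w, (∃ v ∈ S, w ∈ cnbhd G v) ∧ ¬ ∃ v ∈ S.erase x, w ∈ cnbhd G v

/-- The upper irredundance number `IR(G)`. -/
def upperIrredNum (G : SimpleGraph V) : ℕ :=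
  sSup {k | ∃ S : Finset V, Irredundant G S ∧ (∀ T, S ⊂ T → ¬ Irredundant G T) ∧ S.card = k}

/-- The star `K_{1,n}` with center `0`. -/
def starGraph (n : ℕ) : SimpleGraph (Fin (n+1)) where
  Adj a b := a ≠ b ∧ (a = 0 ∨ b = 0)
  symm := by constructor; intro a b h; exact ⟨h.1.symm, h.2.symm⟩
  loopless := by constructor; intro a h; exact h.1 rfl

/-- Two copies of `K_n` with a matching joining corresponding vertices of
index `≥ 1` (i.e. `K_n □ K₂` minus the matching edge at index `0`). -/
def Hgraph (n : ℕ) : SimpleGraph (Fin n × Bool) where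
  Adj a b := (a.2 = b.2 ∧ a.1 ≠ b.1) ∨ (a.2 ≠ b.2 ∧ a.1 = b.1 ∧ (a.1 : ℕ) ≠ 0)
  symm := by
    constructor
    rintro ⟨i, s⟩ ⟨j, t⟩ (⟨h1, h2⟩ | ⟨h1, h2, h3⟩)
    · exact Or.inl ⟨h1.symm, h2.symm⟩
    · exact Or.inr ⟨h1.symm, h2.symm, h2 ▸ h3⟩
  loopless := by constructor; rintro ⟨i, s⟩ (⟨_, h⟩ | ⟨h, _⟩) <;> exact h rfl

/-- The `k`-th power of the path on `n` vertices: `i ~ j` iff `1 ≤ |i-j| ≤ k`. -/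
def pathPow (n k : ℕ) : SimpleGraph (Fin n) where
  Adj i j := i ≠ j ∧ (i : ℕ) ≤ (j : ℕ) + k ∧ (j : ℕ) ≤ (i : ℕ) + k
  symm := by constructor; intro i j h; exact ⟨h.1.symm, h.2.2, h.2.1⟩
  loopless := by constructor; intro i h; exact h.1 rfl

/-- The cycle on `m` vertices (for `m ≥ 3`), modeled on `ZMod m`. -/
def cyc (m : ℕ) : SimpleGraph (ZMod m) where
  Adj i j := i ≠ j ∧ (i + 1 = j ∨ j + 1 = i)
  symm := by constructor; intro i j h; exact ⟨h.1.symm, h.2.symm⟩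
  loopless := by constructor; intro i h; exact h.1 rfl

/-- The graph `D₁`: a `9`-cycle `x₁x₂…x₉` plus chords `x₁x₃, x₄x₆, x₇x₉`
(vertex `xᵢ` is represented by `i - 1 : ZMod 9`). -/
def DGraph : SimpleGraph (ZMod 9) where
  Adj i j := i ≠ j ∧ (i + 1 = j ∨ j + 1 = i ∨
    (i = 0 ∧ j = 2) ∨ (i = 2 ∧ j = 0) ∨ (i = 3 ∧ j = 5) ∨ (i = 5 ∧ j = 3) ∨
    (i = 6 ∧ j = 8) ∨ (i = 8 ∧ j = 6))
  symm := by constructor; intro i j h; refine ⟨h.1.symm, ?_⟩; tauto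
  loopless := by constructor; intro i h; exact h.1 rfl



section Aux

variable {G : SimpleGraph V}

lemma mem_cnbhd {u v : V} : u ∈ cnbhd G v ↔ u = v ∨ G.Adj v u := by
  simp [cnbhd]

lemma self_mem_cnbhd (v : V) : v ∈ cnbhd G v := mem_insert_self v _

lemma cnbhd_comm {u v : V} : u ∈ cnbhd G v ↔ v ∈ cnbhd G u := by
  simp only [mem_cnbhd]
  constructor
  · rintro (rfl | h)
    exacts [Or.inl rfl, Or.inr h.symm]
  · rintro (rfl | h)
    exacts [Or.inl rfl, Or.inr h.symm]

lemma mem_undom {D : Finset V} {u : V} :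
    u ∈ undom G D ↔ ∀ v ∈ D, u ∉ cnbhd G v := by simp [undom]

lemma undom_empty (G : SimpleGraph V) : undom G ∅ = Finset.univ := by
  ext x; simp [undom]

lemma undom_insert_subset (G : SimpleGraph V) (v : V) (D : Finset V) :
    undom G (insert v D) ⊆ undom G D := by
  intro x hx
  rw [mem_undom] at hx ⊢
  exact fun w hw => hx w (mem_insert_of_mem hw)

lemma not_mem_undom_insert {D : Finset V} {u v : V}
    (h : v ∈ cnbhd G u) : u ∉ undom G (insert v D) := by
  rw [mem_undom]
  push_neg
  exact ⟨v, mem_insert_self _ _, cnbhd_comm.mp h⟩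

lemma card_undom_insert_lt {D : Finset V} {u v : V}
    (hu : u ∈ undom G D) (h : v ∈ cnbhd G u) :
    (undom G (insert v D)).card < (undom G D).card :=
  card_lt_card ⟨undom_insert_subset G v D, fun hs => not_mem_undom_insert h (hs hu)⟩

lemma giAux_of_empty {D : Finset V} (h : ¬ (undom G D).Nonempty) :
    ∀ fuel, giAux G fuel D = 0
  | 0 => rfl
  | (fuel+1) => by rw [giAux, dif_neg h]

/-- Lower bound: Staller can guarantee at least `|A ∩ undom|` further moves,
for a "maximal" independent set `A`. -/
lemma lb_aux (G : SimpleGraph V) (A : Finset V)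
    (hind : ∀ x ∈ A, ∀ y ∈ A, ¬ G.Adj x y)
    (hmax : ∀ u : V, ∃ a ∈ A, a ∈ cnbhd G u) :
    ∀ fuel (D : Finset V), (undom G D).card ≤ fuel →
      (A ∩ undom G D).card ≤ giAux G fuel D := by
  intro fuel
  induction fuel with
  | zero =>
    intro D hD
    have h0 : undom G D = ∅ := card_eq_zero.mp (Nat.le_zero.mp hD)
    rw [h0]
    simp [giAux]
  | succ fuel ih =>
    intro D hD
    rw [giAux]
    by_cases h : (undom G D).Nonempty
    · rw [dif_pos h]
      apply le_inf'
      intro u hu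
      obtain ⟨a, haA, hac⟩ := hmax u
      refine le_trans ?_ (le_sup' _ hac)
      have hfuel : (undom G (insert a D)).card ≤ fuel :=
        Nat.lt_succ_iff.mp (lt_of_lt_of_le (card_undom_insert_lt hu hac) hD)
      have hsub : A ∩ undom G D ⊆ insert a (A ∩ undom G (insert a D)) := by
        intro x hx
        rw [mem_inter] at hx
        by_cases hxa : x = a
        · subst hxa; exact mem_insert_self x _
        · refine mem_insert_of_mem (mem_inter.mpr ⟨hx.1, ?_⟩)
          rw [mem_undom]
          intro w hw
          rcases mem_insert.mp hw with rfl | hwD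
          · intro hxw
            rcases mem_cnbhd.mp hxw with h' | h'
            · exact hxa h'
            · exact hind w haA x hx.1 h'
          · exact mem_undom.mp hx.2 w hwD
      calc (A ∩ undom G D).card
          ≤ (insert a (A ∩ undom G (insert a D))).card := card_le_card hsub
        _ ≤ (A ∩ undom G (insert a D)).card + 1 := card_insert_le _ _
        _ ≤ giAux G fuel (insert a D) + 1 := by
            exact Nat.add_le_add_right (ih (insert a D) hfuel) 1
    · rw [dif_neg h]
      rw [not_nonempty_iff_eq_empty] at h
      simp [h]

/-- Upper bound: Dominator's strategy in a split graph. -/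
lemma ub_aux (G : SimpleGraph V) (K I : Finset V)
    (hcover : K ∪ I = Finset.univ)
    (hK : ∀ x ∈ K, ∀ y ∈ K, x ≠ y → G.Adj x y)
    (hI : ∀ x ∈ I, ∀ y ∈ I, ¬ G.Adj x y) :
    ∀ fuel (D : Finset V), (undom G D).card ≤ fuel →
      ((∀ k ∈ K, k ∉ undom G D) ∨ (∀ x ∈ I, x ∉ undom G D → x ∈ D)) →
      giAux G fuel D ≤ (I ∩ undom G D).card +
        (if ((K.filter fun k => ∀ x ∈ I, ¬ G.Adj k x) ∩ undom G D).Nonempty then 1 else 0) := by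
  intro fuel
  induction fuel with
  | zero =>
    intro D _ _
    simp [giAux]
  | succ fuel ih =>
    intro D hD hP
    rw [giAux]
    by_cases h : (undom G D).Nonempty
    swap
    · rw [dif_neg h]; exact Nat.zero_le _
    rw [dif_pos h]
    by_cases hIu : (I ∩ undom G D).Nonempty
    · -- Dominator indicates an undominated vertex of I
      obtain ⟨u, hu⟩ := hIu
      have huI : u ∈ I := (mem_inter.mp hu).1
      have huU : u ∈ undom G D := (mem_inter.mp hu).2
      refine le_trans (inf'_le _ huU) (sup'_le _ _ ?_)
      intro v hv
      have hfuel : (undom G (insert v D)).card ≤ fuel :=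
        Nat.lt_succ_iff.mp (lt_of_lt_of_le (card_undom_insert_lt huU hv) hD)
      have hP' : (∀ k ∈ K, k ∉ undom G (insert v D)) ∨
          (∀ x ∈ I, x ∉ undom G (insert v D) → x ∈ insert v D) := by
        rcases mem_cnbhd.mp hv with rfl | hadj
        · -- Staller selected u itself
          rcases hP with hL | hR
          · exact Or.inl fun k hk hk' => hL k hk (undom_insert_subset G v D hk')
          · refine Or.inr fun x hxI hx' => ?_
            by_cases hxD : x ∈ undom G D
            · rw [mem_undom] at hx'
              push_neg at hx'
              obtain ⟨w, hw, hxw⟩ := hx'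
              rcases mem_insert.mp hw with rfl | hwD
              · rcases mem_cnbhd.mp hxw with h' | h'
                · exact h' ▸ mem_insert_self w D
                · exact absurd h' (hI w huI x hxI)
              · exact absurd hxw (mem_undom.mp hxD w hwD)
            · exact mem_insert_of_mem (hR x hxI hxD)
        · -- Staller selected a neighbor of u, necessarily in K
          have hvK : v ∈ K := by
            have : v ∈ K ∪ I := hcover ▸ mem_univ v
            rcases mem_union.mp this with h' | h'
            · exact h'
            · exact absurd hadj (hI u huI v h')
          refine Or.inl fun k hk hk' => ?_
          have : v ∈ cnbhd G k := by
            by_cases hkv : k = v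
            · subst hkv; exact self_mem_cnbhd _
            · exact mem_cnbhd.mpr (Or.inr (hK k hk v hvK hkv))
          exact not_mem_undom_insert this hk'
      have hrec := ih (insert v D) hfuel hP'
      have h1 : I ∩ undom G (insert v D) ⊆ (I ∩ undom G D).erase u := by
        intro x hx
        rw [mem_inter] at hx
        rw [mem_erase, mem_inter]
        refine ⟨?_, hx.1, undom_insert_subset G v D hx.2⟩
        rintro rfl
        exact not_mem_undom_insert hv hx.2
      have h2 : (I ∩ undom G (insert v D)).card ≤ (I ∩ undom G D).card - 1 := by
        refine le_trans (card_le_card h1) ?_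
        rw [card_erase_of_mem hu]
      have h3 : 1 ≤ (I ∩ undom G D).card := card_pos.mpr ⟨u, hu⟩
      have hmono :
          (if ((K.filter fun k => ∀ x ∈ I, ¬ G.Adj k x) ∩ undom G (insert v D)).Nonempty
            then 1 else 0) ≤
          (if ((K.filter fun k => ∀ x ∈ I, ¬ G.Adj k x) ∩ undom G D).Nonempty
            then 1 else 0) := by
        split_ifs with hb hb'
        · exact le_refl 1
        · exfalso
          obtain ⟨w, hw⟩ := hb
          rw [mem_inter] at hw
          exact hb' ⟨w, mem_inter.mpr ⟨hw.1, undom_insert_subset G v D hw.2⟩⟩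
        · exact Nat.zero_le 1
        · exact le_refl 0
      omega
    · -- all undominated vertices lie in K; one forced move finishes the game
      obtain ⟨u, huU⟩ := h
      have huI : u ∉ I := fun hx => hIu ⟨u, mem_inter.mpr ⟨hx, huU⟩⟩
      have huK : u ∈ K := by
        have : u ∈ K ∪ I := hcover ▸ mem_univ u
        rcases mem_union.mp this with h' | h'
        · exact h'
        · exact absurd h' huI
      have hR : ∀ x ∈ I, x ∉ undom G D → x ∈ D := by
        rcases hP with hL | hR
        · exact absurd huU (hL u huK)
        · exact hR
      have hbadu : ∀ x ∈ I, ¬ G.Adj u x := by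
        intro x hxI hadj
        have hxU : x ∉ undom G D := fun hx => hIu ⟨x, mem_inter.mpr ⟨hxI, hx⟩⟩
        have hxD : x ∈ D := hR x hxI hxU
        exact mem_undom.mp huU x hxD (mem_cnbhd.mpr (Or.inr hadj.symm))
      have hind : ((K.filter fun k => ∀ x ∈ I, ¬ G.Adj k x) ∩ undom G D).Nonempty :=
        ⟨u, mem_inter.mpr ⟨mem_filter.mpr ⟨huK, hbadu⟩, huU⟩⟩
      rw [if_pos hind]
      refine le_trans (inf'_le _ huU) (sup'_le _ _ ?_)
      intro v hv
      have hvK : v ∈ K := by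
        rcases mem_cnbhd.mp hv with rfl | hadj
        · exact huK
        · have : v ∈ K ∪ I := hcover ▸ mem_univ v
          rcases mem_union.mp this with h' | h'
          · exact h'
          · exact absurd hadj (hbadu v h')
      have hempty : undom G (insert v D) = ∅ := by
        rw [eq_empty_iff_forall_notMem]
        intro w hw
        have hwU : w ∈ undom G D := undom_insert_subset G v D hw
        have hwI : w ∉ I := fun hx => hIu ⟨w, mem_inter.mpr ⟨hx, hwU⟩⟩
        have hwK : w ∈ K := by
          have : w ∈ K ∪ I := hcover ▸ mem_univ w
          rcases mem_union.mp this with h' | h'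
          · exact h'
          · exact absurd h' hwI
        have : v ∈ cnbhd G w := by
          by_cases hwv : w = v
          · subst hwv; exact self_mem_cnbhd _
          · exact mem_cnbhd.mpr (Or.inr (hK w hwK v hvK hwv))
        exact not_mem_undom_insert this hw
      rw [giAux_of_empty (by rw [hempty]; exact not_nonempty_empty) fuel]
      exact Nat.le_add_left 1 _

end Aux

/-- if `G` is a split graph, then `γᵢ(G) = α(G)`. -/
theorem stmt7 {V : Type*} [Fintype V] (G : SimpleGraph V) (K I : Finset V)
    (hdisj : Disjoint K I) (hcover : K ∪ I = Finset.univ)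
    (hK : ∀ x ∈ K, ∀ y ∈ K, x ≠ y → G.Adj x y)
    (hI : ∀ x ∈ I, ∀ y ∈ I, ¬ G.Adj x y) :
    indicatedDomNum G = indepNum G := by
  classical
  have hbdd : BddAbove {k | ∃ S : Finset V, (∀ x ∈ S, ∀ y ∈ S, ¬ G.Adj x y) ∧ S.card = k} := by
    refine ⟨Fintype.card V, ?_⟩
    rintro k ⟨T, _, hT⟩
    exact hT ▸ card_le_univ T
  have hne : ({k | ∃ S : Finset V, (∀ x ∈ S, ∀ y ∈ S, ¬ G.Adj x y) ∧ S.card = k}).Nonempty :=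
    ⟨0, ∅, by simp, rfl⟩
  have hmem : indepNum G ∈
      {k | ∃ S : Finset V, (∀ x ∈ S, ∀ y ∈ S, ¬ G.Adj x y) ∧ S.card = k} :=
    Nat.sSup_mem hne hbdd
  obtain ⟨A, hAind, hAcard⟩ := hmem
  have hAmax : ∀ u : V, ∃ a ∈ A, a ∈ cnbhd G u := by
    intro u
    by_cases hu : u ∈ A
    · exact ⟨u, hu, self_mem_cnbhd u⟩
    by_contra hcon
    push_neg at hcon
    have hins : ∀ x ∈ insert u A, ∀ y ∈ insert u A, ¬ G.Adj x y := by
      intro x hx y hy hadj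
      rcases mem_insert.mp hx with rfl | hx' <;> rcases mem_insert.mp hy with rfl | hy'
      · exact G.loopless.irrefl _ hadj
      · exact hcon y hy' (mem_cnbhd.mpr (Or.inr hadj))
      · exact hcon x hx' (mem_cnbhd.mpr (Or.inr hadj.symm))
      · exact hAind x hx' y hy' hadj
    have hmem2 : A.card + 1 ∈
        {k | ∃ S : Finset V, (∀ x ∈ S, ∀ y ∈ S, ¬ G.Adj x y) ∧ S.card = k} :=
      ⟨insert u A, hins, by rw [card_insert_of_notMem hu]⟩
    have hle : A.card + 1 ≤ indepNum G := le_csSup hbdd hmem2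
    omega
  have hlow : indepNum G ≤ indicatedDomNum G := by
    have h := lb_aux G A hAind hAmax (Fintype.card V) ∅
      (by rw [undom_empty, card_univ])
    rw [undom_empty, inter_univ] at h
    rw [indicatedDomNum]
    omega
  have hup : indicatedDomNum G ≤ indepNum G := by
    have hP0 : (∀ k ∈ K, k ∉ undom G (∅ : Finset V)) ∨
        (∀ x ∈ I, x ∉ undom G (∅ : Finset V) → x ∈ (∅ : Finset V)) := by
      right
      intro x _ hxu
      exact absurd (by rw [undom_empty]; exact mem_univ x) hxu
    have h := ub_aux G K I hcover hK hI (Fintype.card V) ∅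
      (by rw [undom_empty, card_univ]) hP0
    rw [undom_empty, inter_univ, inter_univ] at h
    rw [indicatedDomNum]
    by_cases hbad : (K.filter fun k => ∀ x ∈ I, ¬ G.Adj k x).Nonempty
    · rw [if_pos hbad] at h
      obtain ⟨k, hk⟩ := hbad
      rw [mem_filter] at hk
      have hkI : k ∉ I := Finset.disjoint_left.mp hdisj hk.1
      have hins : ∀ x ∈ insert k I, ∀ y ∈ insert k I, ¬ G.Adj x y := by
        intro x hx y hy hadj
        rcases mem_insert.mp hx with rfl | hx' <;> rcases mem_insert.mp hy with rfl | hy'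
        · exact G.loopless.irrefl _ hadj
        · exact hk.2 y hy' hadj
        · exact hk.2 x hx' hadj.symm
        · exact hI x hx' y hy' hadj
      have hmem2 : I.card + 1 ∈
          {k | ∃ S : Finset V, (∀ x ∈ S, ∀ y ∈ S, ¬ G.Adj x y) ∧ S.card = k} :=
        ⟨insert k I, hins, by rw [card_insert_of_notMem hkI]⟩
      have hle : I.card + 1 ≤ indepNum G := le_csSup hbdd hmem2
      omega
    · rw [if_neg hbad] at h
      have hmem2 : I.card ∈
          {k | ∃ S : Finset V, (∀ x ∈ S, ∀ y ∈ S, ¬ G.Adj x y) ∧ S.card = k} :=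
        ⟨I, hI, rfl⟩
      have hle : I.card ≤ indepNum G := le_csSup hbdd hmem2
      omega
  exact le_antisymm hup hlow

end IndicatedDom
end
end

section
/- For all n ≥ k ≥ 2, γᵢ(P_n^k) ≤ ((⌈log₂(k+1)⌉ + 2)/(2k+2))·n + ⌈log₂(k+1)⌉ + 2. -/
open Finset

open scoped Classical

noncomputable section

namespace IndicatedDom

variable {V : Type*} [Fintype V]

private lemma mem_cnbhd_pathPow {n k : ℕ} {v x : Fin n} :
    x ∈ cnbhd (pathPow n k) v ↔ (v : ℕ) ≤ (x : ℕ) + k ∧ (x : ℕ) ≤ (v : ℕ) + k := by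
  have hvx : v = x ↔ (v : ℕ) = (x : ℕ) := Fin.ext_iff
  simp only [cnbhd, Finset.mem_insert, SimpleGraph.mem_neighborFinset]
  constructor
  · rintro (rfl | h)
    · omega
    · exact ⟨h.2.1, h.2.2⟩
  · rintro ⟨h1, h2⟩
    by_cases hxv : x = v
    · exact Or.inl hxv
    · exact Or.inr ⟨fun h => hxv h.symm, h1, h2⟩

private lemma mem_undom_iff {V : Type*} [Fintype V] {G : SimpleGraph V} {D : Finset V} {x : V} :
    x ∈ undom G D ↔ ∀ v ∈ D, x ∉ cnbhd G v := by
  simp [undom]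

private lemma mem_undom_insert {V : Type*} [Fintype V] [DecidableEq V] {G : SimpleGraph V}
    {D : Finset V} {v x : V} :
    x ∈ undom G (insert v D) ↔ x ∈ undom G D ∧ x ∉ cnbhd G v := by
  simp only [mem_undom_iff, Finset.mem_insert]
  constructor
  · intro h
    exact ⟨fun w hw => h w (Or.inr hw), h v (Or.inl rfl)⟩
  · rintro ⟨h1, h2⟩ w hw
    rcases hw with rfl | hw
    · exact h2
    · exact h1 w hw

private lemma insertC_eq {α : Type*} [inst : DecidableEq α] (v : α) (D : Finset α) :
    @insert α (Finset α) (@Finset.instInsert α fun a b => Classical.propDecidable (a = b)) v D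
      = insert v D := by
  have h : (fun a b => Classical.propDecidable (a = b)) = inst :=
    funext fun a => funext fun b => Subsingleton.elim _ _
  rw [h]

private lemma size_half_succ_le {s : ℕ} (hs : 1 ≤ s) : Nat.size (s / 2) + 1 ≤ Nat.size s := by
  have h1 : 0 < Nat.size s := Nat.size_pos.mpr hs
  have h2 : s < 2 ^ Nat.size s := Nat.lt_size_self s
  have h3 : s / 2 < 2 ^ (Nat.size s - 1) := by
    apply Nat.div_lt_of_lt_mul
    calc s < 2 ^ Nat.size s := h2
    _ = 2 ^ (Nat.size s - 1) * 2 := by rw [← pow_succ]; congr 1; omega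
    _ = 2 * 2 ^ (Nat.size s - 1) := by ring
  have := Nat.size_le.mpr h3
  omega

private lemma size_le_clog (k : ℕ) (hk : 1 ≤ k) :
    Nat.size (2 * k + 2) ≤ Nat.clog 2 (k + 1) + 2 := by
  have h1 : k + 1 ≤ 2 ^ Nat.clog 2 (k + 1) := Nat.le_pow_clog one_lt_two _
  apply Nat.size_le.mpr
  have h2 : 2 ^ (Nat.clog 2 (k + 1) + 2) = 4 * 2 ^ Nat.clog 2 (k + 1) := by ring
  set x := 2 ^ Nat.clog 2 (k + 1) with hx
  omega

/-- Dominator's strategy for `P_n^k`: the dominated vertices with index `< B`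
lie in the half-open window `[a, B)` of length `≤ 2k+2`, and everything else
has index `> e`.  Dominator indicates the undominated vertex of the window
closest to the midpoint; each reply halves the window, and a cleared window
costs `⌈log₂(k+1)⌉ + 2` moves per `2k+2` new vertices. -/
private lemma key (n k : ℕ) (hk : 2 ≤ k) :
    ∀ M fuel a B e (D : Finset (Fin n)),
      fuel + (n - 1 - e) ≤ M →
      B ≤ a + 2 * k + 2 →
      (∀ x ∈ undom (pathPow n k) D, (a ≤ (x : ℕ) ∧ (x : ℕ) < B) ∨ e < (x : ℕ)) →
      giAux (pathPow n k) fuel D ≤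
        Nat.size (B - a) +
          (Nat.clog 2 (k + 1) + 2) * ((n - 1 - e + 2 * k + 1) / (2 * k + 2)) := by
  intro M
  induction M using Nat.strong_induction_on with
  | _ M IH =>
  intro fuel a B e D hM hB hinv
  match fuel, hM with
  | 0, hM => simp [giAux]
  | fuel + 1, hM =>
    by_cases h : (undom (pathPow n k) D).Nonempty
    · by_cases hS : ((undom (pathPow n k) D).filter
          fun x : Fin n => a ≤ (x : ℕ) ∧ (x : ℕ) < B).Nonempty
      · -- move case: indicate the undominated window vertex closest to the midpoint
        rw [giAux, dif_pos h]
        set m := a + (B - a) / 2 with hm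
        obtain ⟨u, hu, hmin⟩ := Finset.exists_min_image _
          (fun y : Fin n => ((y : ℕ) - m) + (m - (y : ℕ))) hS
        rw [Finset.mem_filter] at hu
        have hu1 := hu.1
        have hua := hu.2.1
        have huB := hu.2.2
        refine le_trans (Finset.inf'_le _ hu1) (Finset.sup'_le _ _ ?_)
        intro v hv
        rw [insertC_eq]
        rw [mem_cnbhd_pathPow] at hv
        have hsize1 : 1 ≤ B - a := by omega
        by_cases Hex : ∃ x ∈ undom (pathPow n k) (insert v D),
            a ≤ (x : ℕ) ∧ (x : ℕ) < B ∧ (v : ℕ) + k < (x : ℕ)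
        · -- all surviving window vertices are to the right of the midpoint
          obtain ⟨x0, hx0U, hx0a, hx0B, hx0v⟩ := Hex
          have hinv' : ∀ x ∈ undom (pathPow n k) (insert v D),
              (m + 1 ≤ (x : ℕ) ∧ (x : ℕ) < B) ∨ e < (x : ℕ) := by
            intro x hx
            rw [mem_undom_insert] at hx
            obtain ⟨hxD, hxv⟩ := hx
            rcases hinv x hxD with ⟨hxa, hxB⟩ | hxe
            · left
              refine ⟨?_, hxB⟩
              rw [mem_cnbhd_pathPow] at hxv
              push_neg at hxv
              have hside : (v : ℕ) + k < (x : ℕ) := by omega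
              have hminx := hmin x (Finset.mem_filter.mpr ⟨hxD, hxa, hxB⟩)
              omega
            · exact Or.inr hxe
          have hrec := IH (M - 1) (by omega) fuel (m + 1) B e (insert v D)
            (by omega) (by omega) hinv'
          have hb2 : B - (m + 1) ≤ (B - a) / 2 := by omega
          have hs1 := Nat.size_le_size hb2
          have hs2 := size_half_succ_le hsize1
          omega
        · -- all surviving window vertices are to the left of the midpoint
          push_neg at Hex
          have hinv' : ∀ x ∈ undom (pathPow n k) (insert v D),
              (a ≤ (x : ℕ) ∧ (x : ℕ) < m) ∨ e < (x : ℕ) := by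
            intro x hx
            have hxne := Hex x hx
            rw [mem_undom_insert] at hx
            obtain ⟨hxD, hxv⟩ := hx
            rcases hinv x hxD with ⟨hxa, hxB⟩ | hxe
            · left
              refine ⟨hxa, ?_⟩
              rw [mem_cnbhd_pathPow] at hxv
              push_neg at hxv
              have hside : (x : ℕ) + k < (v : ℕ) := by omega
              have hminx := hmin x (Finset.mem_filter.mpr ⟨hxD, hxa, hxB⟩)
              omega
            · exact Or.inr hxe
          have hrec := IH (M - 1) (by omega) fuel a m e (insert v D)
            (by omega) (by omega) hinv'
          have hb2 : m - a ≤ (B - a) / 2 := by omega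
          have hs1 := Nat.size_le_size hb2
          have hs2 := size_half_succ_le hsize1
          omega
      · -- window cleared: advance to the next window of `2k+2` vertices
        obtain ⟨x0, hx0⟩ := h
        have hx0e : e < (x0 : ℕ) := by
          rcases hinv x0 hx0 with hin | hgt
          · exact absurd ⟨x0, Finset.mem_filter.mpr ⟨hx0, hin⟩⟩ hS
          · exact hgt
        have hinv2 : ∀ x ∈ undom (pathPow n k) D, e < (x : ℕ) := by
          intro x hx
          rcases hinv x hx with hin | hgt
          · exact absurd ⟨x, Finset.mem_filter.mpr ⟨hx, hin⟩⟩ hS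
          · exact hgt
        have hx0n : (x0 : ℕ) < n := x0.isLt
        have hinv' : ∀ x ∈ undom (pathPow n k) D,
            (e + 1 ≤ (x : ℕ) ∧ (x : ℕ) < e + 2 * k + 3) ∨ e + 2 * k + 2 < (x : ℕ) := by
          intro x hx
          have := hinv2 x hx
          omega
        have hrec := IH (M - 1) (by omega) (fuel + 1) (e + 1) (e + 2 * k + 3)
          (e + 2 * k + 2) D (by omega) (by omega) hinv'
        have heq : e + 2 * k + 3 - (e + 1) = 2 * k + 2 := by omega
        rw [heq] at hrec
        refine le_trans hrec ?_
        have h1 : Nat.size (2 * k + 2) ≤ Nat.clog 2 (k + 1) + 2 := size_le_clog k (by omega)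
        have h2 : (n - 1 - (e + 2 * k + 2) + 2 * k + 1) / (2 * k + 2) + 1 ≤
            (n - 1 - e + 2 * k + 1) / (2 * k + 2) := by
          rcases le_or_gt (2 * k + 2) (n - 1 - e) with hc1 | hc1
          · have h4 : (n - 1 - (e + 2 * k + 2) + 2 * k + 1 + (2 * k + 2)) / (2 * k + 2) =
                (n - 1 - (e + 2 * k + 2) + 2 * k + 1) / (2 * k + 2) + 1 :=
              Nat.add_div_right _ (by omega)
            have h5 : n - 1 - (e + 2 * k + 2) + 2 * k + 1 + (2 * k + 2) =
                n - 1 - e + 2 * k + 1 := by omega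
            rw [h5] at h4
            omega
          · have h4 : n - 1 - (e + 2 * k + 2) + 2 * k + 1 = 2 * k + 1 := by omega
            rw [h4]
            have h5 : (2 * k + 1) / (2 * k + 2) = 0 := Nat.div_eq_of_lt (by omega)
            have h6 : 1 ≤ (n - 1 - e + 2 * k + 1) / (2 * k + 2) :=
              (Nat.one_le_div_iff (by omega)).mpr (by omega)
            omega
        have h3 := Nat.mul_le_mul_left (Nat.clog 2 (k + 1) + 2) h2
        rw [Nat.mul_add, Nat.mul_one] at h3
        omega
    · rw [giAux, dif_neg h]
      exact Nat.zero_le _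

/-- for `n ≥ k ≥ 2`,
`γᵢ(P_n^k) ≤ ((⌈log₂(k+1)⌉ + 2)/(2k+2)) ⋅ n + ⌈log₂(k+1)⌉ + 2`. -/
theorem stmt13 (n k : ℕ) (hk : 2 ≤ k) (hn : k ≤ n) :
    (indicatedDomNum (pathPow n k) : ℝ) ≤
      ((Nat.clog 2 (k + 1) + 2 : ℝ) / (2 * k + 2)) * n + Nat.clog 2 (k + 1) + 2 := by
  have hn1 : 1 ≤ n := by omega
  set c := Nat.clog 2 (k + 1) with hc
  set B0 := min (2 * k + 2) n with hB0
  have hB0le : B0 ≤ n := min_le_right _ _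
  have hB0pos : 1 ≤ B0 := le_min (by omega) hn1
  have hkey := key n k hk (Fintype.card (Fin n) + n) (Fintype.card (Fin n)) 0 B0 (B0 - 1) ∅
    (by omega) (by omega) ?_
  rw [← hc] at hkey
  swap
  · intro x _
    have := x.isLt
    omega
  have hind : indicatedDomNum (pathPow n k) = giAux (pathPow n k) (Fintype.card (Fin n)) ∅ :=
    rfl
  rw [hind]
  have hsz : Nat.size (B0 - 0) ≤ c + 2 := by
    have h1 : B0 - 0 ≤ 2 * k + 2 := by omega
    have h2 := Nat.size_le_size h1
    have h3 := size_le_clog k (by omega)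
    omega
  rcases le_or_gt n (2 * k + 2) with hcase | hcase
  · -- small `n`: a single window suffices
    have hB0n : B0 = n := min_eq_right hcase
    have hT : (n - 1 - (B0 - 1) + 2 * k + 1) / (2 * k + 2) = 0 :=
      Nat.div_eq_of_lt (by omega)
    rw [hT, Nat.mul_zero, Nat.add_zero] at hkey
    have hle : giAux (pathPow n k) (Fintype.card (Fin n)) ∅ ≤ c + 2 := le_trans hkey hsz
    have hcast : (giAux (pathPow n k) (Fintype.card (Fin n)) ∅ : ℝ) ≤ (c : ℝ) + 2 := by
      exact_mod_cast hle
    have hpos : 0 ≤ ((c : ℝ) + 2) / (2 * k + 2) * n := by positivity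
    push_cast
    push_cast at hcast
    linarith
  · -- large `n`
    have hB0v : B0 = 2 * k + 2 := min_eq_left (by omega)
    have hT : n - 1 - (B0 - 1) + 2 * k + 1 = n - 1 := by omega
    rw [hT] at hkey
    set q := (n - 1) / (2 * k + 2) with hq
    have hle : giAux (pathPow n k) (Fintype.card (Fin n)) ∅ ≤ (c + 2) + (c + 2) * q := by
      omega
    have hqn : q * (2 * k + 2) ≤ n := le_trans (Nat.div_mul_le_self _ _) (by omega)
    have hpos : (0 : ℝ) < 2 * (k : ℝ) + 2 := by positivity
    have hqr : (q : ℝ) ≤ (n : ℝ) / (2 * (k : ℝ) + 2) := by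
      rw [le_div_iff₀ hpos]
      exact_mod_cast hqn
    have hcast : (giAux (pathPow n k) (Fintype.card (Fin n)) ∅ : ℝ) ≤
        ((c : ℝ) + 2) + ((c : ℝ) + 2) * q := by exact_mod_cast hle
    have h2 : ((c : ℝ) + 2) * q ≤ ((c : ℝ) + 2) * ((n : ℝ) / (2 * (k : ℝ) + 2)) := by
      apply mul_le_mul_of_nonneg_left hqr
      positivity
    have h3 : ((c : ℝ) + 2) * ((n : ℝ) / (2 * (k : ℝ) + 2)) =
        ((c : ℝ) + 2) / (2 * (k : ℝ) + 2) * n := by ring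
    push_cast
    push_cast at hcast
    linarith [h2, h3 ▸ h2]

end IndicatedDom
end
end
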